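/- Let M, N : I² → I be means with M ≤ N pointwise satisfying |M(x,y) − N(x,y)| < |x − y| whenever x ≠ y. Define transfinite sequences x₀=x, y₀=y, x_{α+1}=M(x_α,y_α), y_{α+1}=N(x_α,y_α), and x_α = lim_{β↗α} x_β, y_α = lim_{β↗α} y_β at limit ordinals α. Then x_{ω₁} = y_{ω₁}, where ω₁ is the first uncountable ordinal. -/

import Mathlib

open Ordinal

def IsMean (I : Set ℝ) (M : ℝ → ℝ → ℝ) : Prop :=
  ∀ x ∈ I, ∀ y ∈ I, M x y ∈ I ∧ min x y ≤ M x y ∧ M x y ≤ max x y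

/-- The transfinite orbit of `(x,y)` under `(M,N)`: `x₀ = x`, `y₀ = y`,
`x_{α+1} = M(x_α, y_α)`, `y_{α+1} = N(x_α, y_α)`, and at limit ordinals
`x_α = lim_{β↗α} x_β = sup_{1 ≤ β < α} x_β`, `y_α = lim_{β↗α} y_β = inf_{1 ≤ β < α} y_β`
(for `M ≤ N` the sequences are monotone from index `1` on, so these limits are the
suprema/infima of the tails). -/
noncomputable def tOrbit (M N : ℝ → ℝ → ℝ) (x y : ℝ) (o : Ordinal.{0}) : ℝ × ℝ :=
  Ordinal.limitRecOn o (x, y)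
    (fun _ p => (M p.1 p.2, N p.1 p.2))
    (fun α _ ih =>
      (sSup {t : ℝ | ∃ β : Ordinal, ∃ h : β < α, 1 ≤ β ∧ (ih β h).1 = t},
       sInf {t : ℝ | ∃ β : Ordinal, ∃ h : β < α, 1 ≤ β ∧ (ih β h).2 = t}))

lemma tOrbit_zero (M N : ℝ → ℝ → ℝ) (x y : ℝ) : tOrbit M N x y 0 = (x, y) :=
  Ordinal.limitRecOn_zero _ _ _

lemma tOrbit_succ (M N : ℝ → ℝ → ℝ) (x y : ℝ) (α : Ordinal.{0}) :
    tOrbit M N x y (Order.succ α) =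
      (M (tOrbit M N x y α).1 (tOrbit M N x y α).2,
       N (tOrbit M N x y α).1 (tOrbit M N x y α).2) :=
  Ordinal.limitRecOn_succ _ _ _ _

lemma tOrbit_limit (M N : ℝ → ℝ → ℝ) (x y : ℝ) (α : Ordinal.{0}) (hα : Order.IsSuccLimit α) :
    tOrbit M N x y α =
      (sSup {t : ℝ | ∃ β : Ordinal, ∃ _ : β < α, 1 ≤ β ∧ (tOrbit M N x y β).1 = t},
       sInf {t : ℝ | ∃ β : Ordinal, ∃ _ : β < α, 1 ≤ β ∧ (tOrbit M N x y β).2 = t}) :=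
  Ordinal.limitRecOn_limit _ _ _ _ hα

/-- for comparable means `M ≤ N` with `|M(x,y) − N(x,y)| < |x − y|`
for `x ≠ y`, the transfinite orbit satisfies `x_{ω₁} = y_{ω₁}`. -/
theorem stmt11 (I : Set ℝ) (hI : I.OrdConnected) (M N : ℝ → ℝ → ℝ)
    (hM : IsMean I M) (hN : IsMean I N)
    (hMN : ∀ x ∈ I, ∀ y ∈ I, M x y ≤ N x y)
    (hcontr : ∀ x ∈ I, ∀ y ∈ I, x ≠ y → |M x y - N x y| < |x - y|)
    (x : ℝ) (hx : x ∈ I) (y : ℝ) (hy : y ∈ I) :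
    (tOrbit M N x y ω₁).1 = (tOrbit M N x y ω₁).2 := by
  set f : Ordinal.{0} → ℝ × ℝ := tOrbit M N x y with hf
  have hs0 : (Order.succ (0 : Ordinal)) = 1 := by simp
  have hf1 : f 1 = (M x y, N x y) := by
    rw [← hs0, hf, tOrbit_succ, tOrbit_zero]
  -- the key invariant
  have key : ∀ α : Ordinal, 1 ≤ α →
      (f α).1 ∈ I ∧ (f α).2 ∈ I ∧ (f α).1 ≤ (f α).2 ∧
      ∀ β, 1 ≤ β → β ≤ α → (f β).1 ≤ (f α).1 ∧ (f α).2 ≤ (f β).2 := by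
    intro α
    induction α using Ordinal.induction with
    | _ α ih =>
      intro hα1
      rcases Ordinal.zero_or_succ_or_isSuccLimit α with rfl | ⟨γ, rfl⟩ | hlim
      · exact absurd hα1 (by simp)
      · rcases eq_or_ne γ 0 with rfl | hγ0
        · rw [hs0, hf1]
          obtain ⟨hMI, hm1, hm2⟩ := hM x hx y hy
          obtain ⟨hNI, hn1, hn2⟩ := hN x hx y hy
          refine ⟨hMI, hNI, hMN x hx y hy, ?_⟩
          intro β hβ1 hβ
          have : β = 1 := le_antisymm hβ hβ1
          subst this
          rw [hf1]
          exact ⟨le_rfl, le_rfl⟩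
        · have hγ1 : 1 ≤ γ := Ordinal.one_le_iff_ne_zero.2 hγ0
          obtain ⟨hXI, hYI, hXY, hmono⟩ := ih γ (Order.lt_succ γ) hγ1
          have hfs : f (Order.succ γ) = (M (f γ).1 (f γ).2, N (f γ).1 (f γ).2) :=
            tOrbit_succ M N x y γ
          obtain ⟨hMI, hm1, hm2⟩ := hM _ hXI _ hYI
          obtain ⟨hNI, hn1, hn2⟩ := hN _ hXI _ hYI
          rw [min_eq_left hXY] at hm1 hn1
          rw [max_eq_right hXY] at hm2 hn2
          rw [hfs]
          refine ⟨hMI, hNI, hMN _ hXI _ hYI, ?_⟩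
          intro β hβ1 hβ
          rcases lt_or_eq_of_le hβ with hlt | rfl
          · have hβγ : β ≤ γ := Order.lt_succ_iff.1 hlt
            obtain ⟨h1, h2⟩ := hmono β hβ1 hβγ
            exact ⟨h1.trans hm1, hn2.trans h2⟩
          · rw [hfs]; exact ⟨le_rfl, le_rfl⟩
      · have hfa : f α =
            (sSup {t : ℝ | ∃ β : Ordinal, ∃ _ : β < α, 1 ≤ β ∧ (f β).1 = t},
             sInf {t : ℝ | ∃ β : Ordinal, ∃ _ : β < α, 1 ≤ β ∧ (f β).2 = t}) :=
          tOrbit_limit M N x y α hlim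
        set S := {t : ℝ | ∃ β : Ordinal, ∃ _ : β < α, 1 ≤ β ∧ (f β).1 = t} with hS
        set T := {t : ℝ | ∃ β : Ordinal, ∃ _ : β < α, 1 ≤ β ∧ (f β).2 = t} with hT
        have h1α : (1 : Ordinal) < α := by
          rw [← hs0]; exact hlim.succ_lt hlim.pos
        obtain ⟨hX1I, hY1I, hXY1, _⟩ := ih 1 h1α le_rfl
        have hSne : S.Nonempty := ⟨(f 1).1, 1, h1α, le_rfl, rfl⟩
        have hTne : T.Nonempty := ⟨(f 1).2, 1, h1α, le_rfl, rfl⟩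
        have hSub : ∀ t ∈ S, t ≤ (f 1).2 := by
          rintro t ⟨β, hβα, hβ1, rfl⟩
          obtain ⟨_, _, hXYβ, hmonoβ⟩ := ih β hβα hβ1
          exact hXYβ.trans (hmonoβ 1 le_rfl hβ1).2
        have hTlb : ∀ t ∈ T, (f 1).1 ≤ t := by
          rintro t ⟨β, hβα, hβ1, rfl⟩
          obtain ⟨_, _, hXYβ, hmonoβ⟩ := ih β hβα hβ1
          exact ((hmonoβ 1 le_rfl hβ1).1).trans hXYβ
        have hSbdd : BddAbove S := ⟨(f 1).2, hSub⟩
        have hTbdd : BddBelow T := ⟨(f 1).1, hTlb⟩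
        have hsup_le : sSup S ≤ (f 1).2 := csSup_le hSne hSub
        have hle_inf : (f 1).1 ≤ sInf T := le_csInf hTne hTlb
        have h1S : (f 1).1 ∈ S := ⟨1, h1α, le_rfl, rfl⟩
        have h1T : (f 1).2 ∈ T := ⟨1, h1α, le_rfl, rfl⟩
        have hX1sup : (f 1).1 ≤ sSup S := le_csSup hSbdd h1S
        have hinfY1 : sInf T ≤ (f 1).2 := csInf_le hTbdd h1T
        have hsupinf : sSup S ≤ sInf T := by
          apply csSup_le hSne
          rintro t ⟨β, hβα, hβ1, rfl⟩
          apply le_csInf hTne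
          rintro s ⟨γ, hγα, hγ1, rfl⟩
          have hδα : max β γ < α := max_lt hβα hγα
          have hδ1 : 1 ≤ max β γ := hβ1.trans (le_max_left β γ)
          obtain ⟨_, _, hXYδ, hmonoδ⟩ := ih (max β γ) hδα hδ1
          calc (f β).1 ≤ (f (max β γ)).1 := (hmonoδ β hβ1 (le_max_left β γ)).1
            _ ≤ (f (max β γ)).2 := hXYδ
            _ ≤ (f γ).2 := (hmonoδ γ hγ1 (le_max_right β γ)).2
        rw [hfa]
        refine ⟨hI.out hX1I hY1I ⟨hX1sup, hsup_le⟩,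
                hI.out hX1I hY1I ⟨hle_inf, hinfY1⟩, hsupinf, ?_⟩
        intro β hβ1 hβ
        rcases lt_or_eq_of_le hβ with hlt | rfl
        · exact ⟨le_csSup hSbdd ⟨β, hlt, hβ1, rfl⟩, csInf_le hTbdd ⟨β, hlt, hβ1, rfl⟩⟩
        · rw [hfa]; exact ⟨le_rfl, le_rfl⟩
  -- equality persists
  have persist : ∀ α : Ordinal, 1 ≤ α → (f α).1 = (f α).2 →
      ∀ β, α ≤ β → (f β).1 = (f α).1 ∧ (f β).2 = (f α).1 := by
    intro α hα1 heq β
    induction β using Ordinal.induction with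
    | _ β ih =>
      intro hαβ
      rcases Ordinal.zero_or_succ_or_isSuccLimit β with rfl | ⟨γ, rfl⟩ | hlim
      · exact absurd (hα1.trans hαβ) (by simp)
      · rcases le_or_gt α γ with h | h
        · obtain ⟨e1, e2⟩ := ih γ (Order.lt_succ γ) h
          have hc : (f α).1 ∈ I := (key α hα1).1
          obtain ⟨_, hm1, hm2⟩ := hM _ hc _ hc
          obtain ⟨_, hn1, hn2⟩ := hN _ hc _ hc
          rw [min_self] at hm1 hn1
          rw [max_self] at hm2 hn2
          have hMcc : M (f α).1 (f α).1 = (f α).1 := le_antisymm hm2 hm1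
          have hNcc : N (f α).1 (f α).1 = (f α).1 := le_antisymm hn2 hn1
          have hfs : f (Order.succ γ) = (M (f γ).1 (f γ).2, N (f γ).1 (f γ).2) :=
            tOrbit_succ M N x y γ
          rw [hfs, e1, e2]
          exact ⟨hMcc, hNcc⟩
        · have : α = Order.succ γ := le_antisymm hαβ (Order.succ_le_of_lt h)
          subst this
          exact ⟨rfl, heq.symm⟩
      · rcases eq_or_lt_of_le hαβ with rfl | h
        · exact ⟨rfl, heq.symm⟩
        · have hfb : f β =
              (sSup {t : ℝ | ∃ δ : Ordinal, ∃ _ : δ < β, 1 ≤ δ ∧ (f δ).1 = t},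
               sInf {t : ℝ | ∃ δ : Ordinal, ∃ _ : δ < β, 1 ≤ δ ∧ (f δ).2 = t}) :=
            tOrbit_limit M N x y β hlim
          set S := {t : ℝ | ∃ δ : Ordinal, ∃ _ : δ < β, 1 ≤ δ ∧ (f δ).1 = t} with hS
          set T := {t : ℝ | ∃ δ : Ordinal, ∃ _ : δ < β, 1 ≤ δ ∧ (f δ).2 = t} with hT
          have hmem : (f α).1 ∈ S := ⟨α, h, hα1, rfl⟩
          have hmemT : (f α).1 ∈ T := ⟨α, h, hα1, heq.symm⟩
          have hub : ∀ t ∈ S, t ≤ (f α).1 := by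
            rintro t ⟨δ, hδβ, hδ1, rfl⟩
            rcases le_or_gt α δ with h' | h'
            · exact le_of_eq (ih δ hδβ h').1
            · exact ((key α hα1).2.2.2 δ hδ1 h'.le).1
          have hlb : ∀ t ∈ T, (f α).1 ≤ t := by
            rintro t ⟨δ, hδβ, hδ1, rfl⟩
            rcases le_or_gt α δ with h' | h'
            · exact le_of_eq (ih δ hδβ h').2.symm
            · exact heq.trans_le ((key α hα1).2.2.2 δ hδ1 h'.le).2
          constructor
          · rw [hfb]
            exact le_antisymm (csSup_le ⟨_, hmem⟩ hub) (le_csSup ⟨_, hub⟩ hmem)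
          · rw [hfb]
            exact le_antisymm (csInf_le ⟨_, hlb⟩ hmemT) (le_csInf ⟨_, hmemT⟩ hlb)
  -- main argument
  by_contra hne'
  have hω1lim : Order.IsSuccLimit (ω₁ : Ordinal.{0}) := Cardinal.isSuccLimit_omega 1
  have h1ω1 : (1 : Ordinal.{0}) < (ω₁ : Ordinal.{0}) :=
    Ordinal.one_lt_omega0.trans_le (Ordinal.omega0_le_omega 1)
  have hlt : ∀ α : Ordinal, 1 ≤ α → α < ω₁ → (f α).1 < (f α).2 := by
    intro α hα1 hαω
    rcases eq_or_lt_of_le (key α hα1).2.2.1 with heq | h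
    · obtain ⟨e1, e2⟩ := persist α hα1 heq ω₁ hαω.le
      exact absurd (e1.trans e2.symm) hne'
    · exact h
  set g : Ordinal.{0} → ℝ := fun α => (f α).2 - (f α).1 with hg
  have hsuccdec : ∀ α : Ordinal, 1 ≤ α → α < ω₁ → g (Order.succ α) < g α := by
    intro α hα1 hαω
    obtain ⟨hXI, hYI, hXY, _⟩ := key α hα1
    have hne2 : (f α).1 ≠ (f α).2 := ne_of_lt (hlt α hα1 hαω)
    have hc := hcontr _ hXI _ hYI hne2
    have hMN' := hMN _ hXI _ hYI
    rw [abs_sub_comm, abs_of_nonneg (sub_nonneg.2 hMN'),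
        abs_sub_comm, abs_of_nonneg (sub_nonneg.2 hXY)] at hc
    have hfs : f (Order.succ α) = (M (f α).1 (f α).2, N (f α).1 (f α).2) :=
      tOrbit_succ M N x y α
    show (f (Order.succ α)).2 - (f (Order.succ α)).1 < (f α).2 - (f α).1
    rw [hfs]
    exact hc
  have hstrict : ∀ α β : Ordinal, 1 ≤ α → α < β → β < ω₁ → g β < g α := by
    intro α β hα1 hαβ hβω
    have hsucc : g (Order.succ α) < g α :=
      hsuccdec α hα1 (hαβ.trans hβω)
    have hsβ : Order.succ α ≤ β := Order.succ_le_of_lt hαβ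
    have hβ1 : 1 ≤ β := hα1.trans hαβ.le
    have h1s : (1 : Ordinal) ≤ Order.succ α := hα1.trans (Order.le_succ α)
    obtain ⟨m1, m2⟩ := (key β hβ1).2.2.2 (Order.succ α) h1s hsβ
    have : g β ≤ g (Order.succ α) := sub_le_sub m2 m1
    exact this.trans_lt hsucc
  -- disjoint open intervals indexed by an uncountable set
  set A : Set Ordinal.{0} := Set.Ico 1 ω₁ with hA
  set s : Ordinal.{0} → Set ℝ := fun α => Set.Ioo (g (Order.succ α)) (g α) with hsdef
  have hd : ∀ a b, a ∈ A → b ∈ A → a < b → Disjoint (s a) (s b) := by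
    intro a b ha hb hab
    have hgles : g b ≤ g (Order.succ a) := by
      rcases eq_or_lt_of_le (Order.succ_le_of_lt hab) with h | h
      · exact le_of_eq (by rw [h])
      · exact (hstrict (Order.succ a) b (ha.1.trans (Order.le_succ a)) h hb.2).le
    rw [Set.disjoint_left]
    rintro t ⟨h1, _⟩ ⟨_, h4⟩
    exact absurd (h4.trans_le hgles) (not_lt.2 h1.le)
  have hdisj : A.PairwiseDisjoint s := by
    intro a ha b hb hab
    rcases lt_or_gt_of_ne hab with h | h
    · exact hd a b ha hb h
    · exact (hd b a hb ha h).symm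
  have hcount : A.Countable := by
    apply hdisj.countable_of_isOpen (fun i _ => isOpen_Ioo)
    intro i hi
    exact Set.nonempty_Ioo.2
      (hsuccdec i hi.1 hi.2)
  -- but A is uncountable
  have hIio : (Set.Iio (ω₁ : Ordinal.{0})).Countable := by
    have hsub : Set.Iio (ω₁ : Ordinal.{0}) ⊆ insert 0 A := by
      intro α hα
      rcases eq_or_ne α 0 with rfl | h
      · exact Set.mem_insert _ _
      · exact Set.mem_insert_of_mem _ ⟨Ordinal.one_le_iff_ne_zero.2 h, hα⟩
    exact (hcount.insert 0).mono hsub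
  have hmk : Cardinal.mk (Set.Iio (ω₁ : Ordinal.{0})) =
      Cardinal.lift.{1} (Cardinal.aleph (1 : Ordinal.{0})) := by
    rw [Ordinal.mk_Iio_ordinal, Ordinal.card_omega]
  have hle : Cardinal.mk (Set.Iio (ω₁ : Ordinal.{0})) ≤ Cardinal.aleph0 :=
    Cardinal.mk_le_aleph0_iff.2 hIio.to_subtype
  rw [hmk] at hle
  have : Cardinal.aleph (1 : Ordinal.{0}) ≤ Cardinal.aleph0 := by
    rw [← Cardinal.lift_aleph0.{1,0}, Cardinal.lift_le] at hle
    exact hle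
  exact absurd this (not_le.2 Cardinal.aleph0_lt_aleph_one)
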